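/- Fix an integer n ≥ 1, set N = 2n + 3, and let V, F, the Verlinde product, and the structure constants N_{ab}^c be as defined. Then for all integers a, b, c with 0 ≤ a, b, c ≤ n one has N_{ab}^c = (−1)^{a+b+c} · |N_{ab}^c|. Equivalently, in the twisted basis ẽ_a := (−1)^a e_a (0 ≤ a ≤ n) all structure constants of the Verlinde product are nonnegative: if ẽ_a · ẽ_b = Σ_c Ñ_{ab}^c ẽ_c then Ñ_{ab}^c = |N_{ab}^c| ≥ 0 for all a, b, c. -/

import Mathlib

open BigOperators

/-- The folding map `F : ℕ → V` for type `A₂⁽²⁾` at level `2n`, where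
`V = Fin (n+1) → ℤ` is the free ℤ-module with basis `e₀, …, e_n` and
`N = 2n + 3`:  `F m = e_{m'}` if `m ≡ m' (mod N)` with `0 ≤ m' ≤ n`;
`F m = 0` if `m ≡ N - 1 (mod N)`; `F m = -e_{m'}` if `m + m' + 2 ≡ 0 (mod N)`
with `0 ≤ m' ≤ n`. -/
def foldA2 (n m : ℕ) : Fin (n + 1) → ℤ :=
  if h : m % (2 * n + 3) ≤ n then
    Pi.single (⟨m % (2 * n + 3), by omega⟩ : Fin (n + 1)) 1
  else if h2 : m % (2 * n + 3) = 2 * n + 2 then 0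
  else - Pi.single (⟨2 * n + 1 - m % (2 * n + 3), by omega⟩ : Fin (n + 1)) 1

/-- The basis vector `e_m` of `V = Fin (n+1) → ℤ` (zero if `m > n`). -/
def eN (n m : ℕ) : Fin (n + 1) → ℤ :=
  if h : m ≤ n then Pi.single (⟨m, by omega⟩ : Fin (n + 1)) 1 else 0

/-- The Verlinde product on `V = Fin (n+1) → ℤ`: the ℤ-bilinear product with
`e_a · e_b = ∑_{i=0}^{min a b} F (a + b - 2 i)`. -/
def vmul (n : ℕ) (x y : Fin (n + 1) → ℤ) : Fin (n + 1) → ℤ :=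
  fun c => ∑ a : Fin (n + 1), ∑ b : Fin (n + 1),
    x a * y b * (∑ i ∈ Finset.range (min a.1 b.1 + 1), foldA2 n (a.1 + b.1 - 2 * i)) c

/-- The structure constants `N_{ab}^c` of the Verlinde product, defined by
`e_a · e_b = ∑_c N_{ab}^c e_c`. -/
def Nconst (n a b c : ℕ) : ℤ :=
  if h : c ≤ n then vmul n (eN n a) (eN n b) ⟨c, by omega⟩ else 0


lemma vmul_smul (n : ℕ) (s t : ℤ) (x y : Fin (n+1) → ℤ) (c : Fin (n+1)) :
    vmul n (s • x) (t • y) c = s * t * vmul n x y c := by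
  simp only [vmul, Pi.smul_apply, smul_eq_mul, Finset.mul_sum]
  exact Finset.sum_congr rfl fun a _ => Finset.sum_congr rfl fun b _ => by ring

lemma Nconst_eq (n a b c : ℕ) (ha : a ≤ n) (hb : b ≤ n) (hc : c ≤ n) :
    Nconst n a b c =
      ∑ i ∈ Finset.range (min a b + 1), foldA2 n (a + b - 2 * i) ⟨c, Nat.lt_succ_of_le hc⟩ := by
  rw [Nconst, dif_pos hc, vmul]
  rw [Finset.sum_eq_single (⟨a, by omega⟩ : Fin (n+1))]
  · rw [Finset.sum_eq_single (⟨b, by omega⟩ : Fin (n+1))]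
    · simp [eN, ha, hb, Finset.sum_apply]
    · intro b' _ hb'
      have : eN n b b' = 0 := by
        rw [eN, dif_pos hb]; exact Pi.single_eq_of_ne hb' 1
      rw [this, mul_zero, zero_mul]
    · intro h; exact absurd (Finset.mem_univ _) h
  · intro a' _ ha'
    have : eN n a a' = 0 := by
      rw [eN, dif_pos ha]; exact Pi.single_eq_of_ne ha' 1
    rw [this]
    exact Finset.sum_eq_zero fun _ _ => by rw [zero_mul, zero_mul]
  · intro h; exact absurd (Finset.mem_univ _) h

lemma fold_term (n a b c i : ℕ) (ha : a ≤ n) (hb : b ≤ n) (hc : c ≤ n)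
    (hi : i ≤ min a b) :
    foldA2 n (a + b - 2 * i) ⟨c, Nat.lt_succ_of_le hc⟩ =
      (if a + b = c + 2 * i then 1 else 0) -
      (if a + b + c = 2 * n + 1 + 2 * i then 1 else 0) := by
  obtain ⟨m, hm'⟩ : ∃ m, a + b = m + 2 * i := ⟨a + b - 2 * i, by omega⟩
  have hsub : a + b - 2 * i = m := by omega
  have hmn : m ≤ 2 * n := by omega
  have hmod : m % (2 * n + 3) = m := Nat.mod_eq_of_lt (by omega)
  rw [hsub, foldA2]
  simp only [hmod]
  rcases le_or_gt m n with hle | hgt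
  · rw [dif_pos hle, Pi.single_apply]
    simp only [Fin.mk.injEq]
    rw [if_neg (by omega : ¬ (a + b + c = 2 * n + 1 + 2 * i)), sub_zero]
    by_cases hcm : c = m
    · rw [if_pos hcm, if_pos (by omega)]
    · rw [if_neg hcm, if_neg (by omega)]
  · rw [dif_neg (by omega), dif_neg (by omega), Pi.neg_apply, Pi.single_apply]
    simp only [Fin.mk.injEq]
    rw [if_neg (by omega : ¬ (a + b = c + 2 * i)), zero_sub]
    by_cases hcm : c = 2 * n + 1 - m
    · rw [if_pos hcm, if_pos (by omega)]
    · rw [if_neg hcm, if_neg (by omega)]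

/-- Sign pattern of the structure constants of the Verlinde algebra of type
`A₂⁽²⁾` at level `2n`: `N_{ab}^c = (-1)^{a+b+c} |N_{ab}^c|`.  Equivalently, in
the twisted basis `ẽ_a = (-1)^a e_a` the structure constants
`Ñ_{ab}^c = (-1)^c ⬝ (ẽ_a · ẽ_b)_c` are the nonnegative integers `|N_{ab}^c|`. -/
theorem Nconst_sign_pattern (n : ℕ) (hn : 1 ≤ n) (a b c : ℕ)
    (ha : a ≤ n) (hb : b ≤ n) (hc : c ≤ n) :
    Nconst n a b c = (-1 : ℤ) ^ (a + b + c) * |Nconst n a b c| ∧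
    (-1 : ℤ) ^ c *
        vmul n (((-1 : ℤ) ^ a) • eN n a) (((-1 : ℤ) ^ b) • eN n b) ⟨c, by omega⟩
      = |Nconst n a b c| ∧
    (0 : ℤ) ≤ (-1 : ℤ) ^ c *
        vmul n (((-1 : ℤ) ^ a) • eN n a) (((-1 : ℤ) ^ b) • eN n b) ⟨c, by omega⟩ := by
  have hkey : Nconst n a b c = (-1 : ℤ) ^ (a + b + c) * |Nconst n a b c| := by
    rw [Nconst_eq n a b c ha hb hc]
    rcases Nat.even_or_odd (a + b + c) with hpar | hpar
    · have hnn : (0:ℤ) ≤ ∑ i ∈ Finset.range (min a b + 1),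
          foldA2 n (a + b - 2 * i) ⟨c, by omega⟩ := by
        apply Finset.sum_nonneg
        intro i hi
        rw [fold_term n a b c i ha hb hc (Nat.lt_succ_iff.mp (Finset.mem_range.mp hi))]
        rw [if_neg (by rcases hpar with ⟨k, hk⟩; omega : ¬ (a + b + c = 2 * n + 1 + 2 * i))]
        split_ifs <;> norm_num
      rw [hpar.neg_one_pow, one_mul, abs_of_nonneg hnn]
    · have hnp : (∑ i ∈ Finset.range (min a b + 1),
          foldA2 n (a + b - 2 * i) ⟨c, by omega⟩) ≤ 0 := by
        apply Finset.sum_nonpos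
        intro i hi
        rw [fold_term n a b c i ha hb hc (Nat.lt_succ_iff.mp (Finset.mem_range.mp hi))]
        rw [if_neg (by rcases hpar with ⟨k, hk⟩; omega : ¬ (a + b = c + 2 * i))]
        split_ifs <;> norm_num
      rw [hpar.neg_one_pow, abs_of_nonpos hnp]; ring
  have hvm : vmul n (((-1 : ℤ) ^ a) • eN n a) (((-1 : ℤ) ^ b) • eN n b) ⟨c, by omega⟩
      = (-1 : ℤ) ^ a * (-1 : ℤ) ^ b * Nconst n a b c := by
    rw [vmul_smul, Nconst, dif_pos hc]
  have h2 : (-1 : ℤ) ^ c *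
      vmul n (((-1 : ℤ) ^ a) • eN n a) (((-1 : ℤ) ^ b) • eN n b) ⟨c, by omega⟩
      = |Nconst n a b c| := by
    rw [hvm]
    calc (-1:ℤ)^c * ((-1:ℤ)^a * (-1:ℤ)^b * Nconst n a b c)
        = (-1:ℤ)^(a+b+c) * Nconst n a b c := by rw [pow_add, pow_add]; ring
      _ = (-1:ℤ)^(a+b+c) * ((-1:ℤ)^(a+b+c) * |Nconst n a b c|) := by rw [← hkey]
      _ = |Nconst n a b c| := by
          rw [← mul_assoc, ← pow_add, Even.neg_one_pow ⟨a+b+c, by ring⟩, one_mul]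
  exact ⟨hkey, h2, h2 ▸ abs_nonneg _⟩
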